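/- Let (f_1, f_2) follow a multinomial distribution with parameters n and probabilities (p_1, p_2) with p_1, p_2 > 0 and p_1 + p_2 < 1, and set \hat{p}_i = f_i/n. Define the joint central moments \mu_{m,k} = E[(\hat{p}_1 - p_1)^m (\hat{p}_2 - p_2)^k]. Then \mu_{1,0} = 0, \mu_{1,1} = -p_1 p_2 / n, and \mu_{m+1,k} = (p_1/n)[(1-p_1) ∂/∂p_1 \mu_{m,k} - p_2 ∂/∂p_2 \mu_{m,k} + (1-p_1) m \mu_{m-1,k} - p_2 k \mu_{m,k-1}]. -/

import Mathlib

/-- `(m,k)`-joint central moment of `(f₁/n, f₂/n)` where `(f₁,f₂)` is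
multinomial with `n` trials and cell probabilities `(p₁,p₂)`. -/
noncomputable def multCentralMoment (n m k : ℕ) (p₁ p₂ : ℝ) : ℝ :=
  ∑ x₁ ∈ Finset.range (n + 1), ∑ x₂ ∈ Finset.range (n - x₁ + 1),
    ((x₁ : ℝ) / (n : ℝ) - p₁) ^ m * ((x₂ : ℝ) / (n : ℝ) - p₂) ^ k *
      ((n.factorial : ℝ) /
        ((x₁.factorial : ℝ) * (x₂.factorial : ℝ) * ((n - x₁ - x₂).factorial : ℝ))) *
      p₁ ^ x₁ * p₂ ^ x₂ * (1 - p₁ - p₂) ^ (n - x₁ - x₂)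

open Finset

section Aux

lemma mcm_aux_pow (c : ℝ) (j : ℕ) : (j:ℝ) * c^(j-1) * c = j * c^j := by
  cases j with
  | zero => simp
  | succ i => simp only [Nat.add_sub_cancel]; push_cast; rw [pow_succ]; ring

lemma mcm_binom_sum (N : ℕ) (a b : ℝ) :
    ∑ x ∈ range (N+1), (N.choose x : ℝ) * a^x * b^(N-x) = (a+b)^N := by
  rw [add_pow]
  exact Finset.sum_congr rfl fun x _ => by ring

lemma mcm_binomMean' (N : ℕ) (c d : ℝ) :
    ∑ x ∈ range (N+1), (x:ℝ) * (N.choose x : ℝ) * c^(x-1) * d^(N-x)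
      = N * (c+d)^(N-1) := by
  cases N with
  | zero => simp
  | succ M =>
    rw [Finset.sum_range_succ']
    simp only [Nat.cast_zero, zero_mul, add_zero, Nat.add_sub_cancel]
    have key : ∀ i : ℕ, ((i+1 : ℕ):ℝ) * (((M+1).choose (i+1) : ℕ):ℝ)
        = ((M+1 : ℕ):ℝ) * ((M.choose i : ℕ):ℝ) := by
      intro i
      have h : (i+1) * ((M+1).choose (i+1)) = (M+1) * M.choose i := by
        rw [mul_comm]; exact (Nat.add_one_mul_choose_eq M i).symm
      exact_mod_cast h
    have step : ∀ x ∈ range (M+1), ((x+1:ℕ):ℝ) * (((M+1).choose (x+1):ℕ):ℝ) * c^x * d^(M+1-(x+1))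
        = ((M+1:ℕ):ℝ) * (((M.choose x : ℕ):ℝ) * c^x * d^(M-x)) := by
      intro x _
      rw [show M+1-(x+1) = M-x from by omega, key x]; ring
    rw [Finset.sum_congr rfl step, ← Finset.mul_sum, mcm_binom_sum]

lemma mcm_binomMean (N : ℕ) (c d : ℝ) :
    ∑ x ∈ range (N+1), (x:ℝ) * (N.choose x : ℝ) * c^x * d^(N-x)
      = N * c * (c+d)^(N-1) := by
  have h := mcm_binomMean' N c d
  calc ∑ x ∈ range (N+1), (x:ℝ) * (N.choose x : ℝ) * c^x * d^(N-x)
      = ∑ x ∈ range (N+1), c * ((x:ℝ) * (N.choose x : ℝ) * c^(x-1) * d^(N-x)) := by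
        refine Finset.sum_congr rfl fun x _ => ?_
        linear_combination (-(N.choose x : ℝ) * d^(N-x)) * (mcm_aux_pow c x)
    _ = N * c * (c+d)^(N-1) := by rw [← Finset.mul_sum, h]; ring

lemma mcm_binomMeanRev (N : ℕ) (c d : ℝ) :
    ∑ x ∈ range (N+1), ((N-x : ℕ):ℝ) * (N.choose x : ℝ) * c^x * d^((N-x)-1)
      = N * (c+d)^(N-1) := by
  have h := Finset.sum_range_reflect
    (fun x => ((N-x : ℕ):ℝ) * (N.choose x : ℝ) * c^x * d^((N-x)-1)) (N+1)
  simp only [Nat.add_sub_cancel] at h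
  rw [← h]
  calc ∑ j ∈ range (N+1), ((N-(N-j) : ℕ):ℝ) * (N.choose (N-j) : ℝ) * c^(N-j) * d^((N-(N-j))-1)
      = ∑ j ∈ range (N+1), (j:ℝ) * (N.choose j : ℝ) * d^(j-1) * c^(N-j) := by
        refine Finset.sum_congr rfl fun j hj => ?_
        have hjN : j ≤ N := by simpa [Nat.lt_succ_iff] using Finset.mem_range.mp hj
        rw [Nat.sub_sub_self hjN, Nat.choose_symm hjN]; ring
    _ = N * (d+c)^(N-1) := mcm_binomMean' N d c
    _ = N * (c+d)^(N-1) := by rw [add_comm d c]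

lemma mcm_co_eq (n x₁ x₂ : ℕ) (h1 : x₁ ≤ n) (h2 : x₂ ≤ n - x₁) :
    (n.factorial : ℝ) /
        ((x₁.factorial : ℝ) * (x₂.factorial : ℝ) * ((n - x₁ - x₂).factorial : ℝ))
      = (n.choose x₁ : ℝ) * ((n - x₁).choose x₂ : ℝ) := by
  have A := Nat.choose_mul_factorial_mul_factorial h1
  have B := Nat.choose_mul_factorial_mul_factorial h2
  have hnat : n.choose x₁ * (n - x₁).choose x₂ * (x₁.factorial * x₂.factorial * (n - x₁ - x₂).factorial)
      = n.factorial := by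
    calc n.choose x₁ * (n - x₁).choose x₂ * (x₁.factorial * x₂.factorial * (n - x₁ - x₂).factorial)
        = n.choose x₁ * x₁.factorial * ((n - x₁).choose x₂ * x₂.factorial * (n - x₁ - x₂).factorial) := by
          ring
      _ = n.choose x₁ * x₁.factorial * (n - x₁).factorial := by rw [B]
      _ = n.factorial := A
  have hne : ((x₁.factorial : ℝ) * (x₂.factorial : ℝ) * ((n - x₁ - x₂).factorial : ℝ)) ≠ 0 := by
    positivity
  rw [div_eq_iff hne]
  exact_mod_cast hnat.symm

lemma mcm00 (n : ℕ) (a b : ℝ) : multCentralMoment n 0 0 a b = 1 := by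
  unfold multCentralMoment
  have step1 : ∀ x₁ ∈ range (n+1),
      (∑ x₂ ∈ range (n - x₁ + 1),
        ((x₁ : ℝ) / n - a) ^ 0 * ((x₂ : ℝ) / n - b) ^ 0 *
          ((n.factorial : ℝ) / ((x₁.factorial : ℝ) * (x₂.factorial : ℝ) * ((n - x₁ - x₂).factorial : ℝ))) *
          a ^ x₁ * b ^ x₂ * (1 - a - b) ^ (n - x₁ - x₂))
      = (n.choose x₁ : ℝ) * a ^ x₁ * (1 - a) ^ (n - x₁) := by
    intro x₁ hx₁
    have h1 : x₁ ≤ n := by simpa [Nat.lt_succ_iff] using Finset.mem_range.mp hx₁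
    have inner : ∀ x₂ ∈ range (n - x₁ + 1),
        ((x₁ : ℝ) / n - a) ^ 0 * ((x₂ : ℝ) / n - b) ^ 0 *
          ((n.factorial : ℝ) / ((x₁.factorial : ℝ) * (x₂.factorial : ℝ) * ((n - x₁ - x₂).factorial : ℝ))) *
          a ^ x₁ * b ^ x₂ * (1 - a - b) ^ (n - x₁ - x₂)
        = (n.choose x₁ : ℝ) * a ^ x₁ * (((n - x₁).choose x₂ : ℝ) * b ^ x₂ * (1 - a - b) ^ (n - x₁ - x₂)) := by
      intro x₂ hx₂
      have h2 : x₂ ≤ n - x₁ := by simpa [Nat.lt_succ_iff] using Finset.mem_range.mp hx₂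
      rw [mcm_co_eq n x₁ x₂ h1 h2]; ring
    rw [Finset.sum_congr rfl inner, ← Finset.mul_sum]
    have hin : ∑ x₂ ∈ range (n - x₁ + 1), ((n - x₁).choose x₂ : ℝ) * b ^ x₂ * (1 - a - b) ^ (n - x₁ - x₂)
        = (1 - a) ^ (n - x₁) := by
      have h3 := mcm_binom_sum (n - x₁) b (1 - a - b)
      rw [show b + (1 - a - b) = 1 - a by ring] at h3
      rw [← h3]
    rw [hin]
  rw [Finset.sum_congr rfl step1]
  have h4 := mcm_binom_sum n a (1 - a)
  rw [show a + (1 - a) = 1 by ring, one_pow] at h4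
  exact h4

lemma mcm01 (n : ℕ) (hn : 0 < n) (a b : ℝ) : multCentralMoment n 0 1 a b = 0 := by
  have hnR : (n:ℝ) ≠ 0 := Nat.cast_ne_zero.mpr hn.ne'
  unfold multCentralMoment
  have step1 : ∀ x₁ ∈ range (n+1),
      (∑ x₂ ∈ range (n - x₁ + 1),
        ((x₁ : ℝ) / n - a) ^ 0 * ((x₂ : ℝ) / n - b) ^ 1 *
          ((n.factorial : ℝ) / ((x₁.factorial : ℝ) * (x₂.factorial : ℝ) * ((n - x₁ - x₂).factorial : ℝ))) *
          a ^ x₁ * b ^ x₂ * (1 - a - b) ^ (n - x₁ - x₂))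
      = b / n * (((n - x₁ : ℕ):ℝ) * (n.choose x₁ : ℝ) * a ^ x₁ * (1 - a) ^ ((n - x₁) - 1))
        - b * ((n.choose x₁ : ℝ) * a ^ x₁ * (1 - a) ^ (n - x₁)) := by
    intro x₁ hx₁
    have h1 : x₁ ≤ n := by simpa [Nat.lt_succ_iff] using Finset.mem_range.mp hx₁
    have inner : ∀ x₂ ∈ range (n - x₁ + 1),
        ((x₁ : ℝ) / n - a) ^ 0 * ((x₂ : ℝ) / n - b) ^ 1 *
          ((n.factorial : ℝ) / ((x₁.factorial : ℝ) * (x₂.factorial : ℝ) * ((n - x₁ - x₂).factorial : ℝ))) *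
          a ^ x₁ * b ^ x₂ * (1 - a - b) ^ (n - x₁ - x₂)
        = (n.choose x₁ : ℝ) * a ^ x₁ *
            ((1 / (n:ℝ)) * ((x₂:ℝ) * ((n - x₁).choose x₂ : ℝ) * b ^ x₂ * (1 - a - b) ^ ((n - x₁) - x₂))
              - b * (((n - x₁).choose x₂ : ℝ) * b ^ x₂ * (1 - a - b) ^ ((n - x₁) - x₂))) := by
      intro x₂ hx₂
      have h2 : x₂ ≤ n - x₁ := by simpa [Nat.lt_succ_iff] using Finset.mem_range.mp hx₂
      rw [mcm_co_eq n x₁ x₂ h1 h2]; ring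
    rw [Finset.sum_congr rfl inner, ← Finset.mul_sum, Finset.sum_sub_distrib,
      ← Finset.mul_sum, ← Finset.mul_sum, mcm_binomMean (n - x₁) b (1 - a - b),
      mcm_binom_sum (n - x₁) b (1 - a - b), show b + (1 - a - b) = 1 - a by ring]
    ring
  rw [Finset.sum_congr rfl step1, Finset.sum_sub_distrib, ← Finset.mul_sum, ← Finset.mul_sum,
    mcm_binomMeanRev n a (1 - a), mcm_binom_sum n a (1 - a),
    show a + (1 - a) = 1 by ring, one_pow, one_pow]
  field_simp
  ring

noncomputable def mcmCo (n x₁ x₂ : ℕ) : ℝ :=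
  (n.factorial : ℝ) / ((x₁.factorial : ℝ) * (x₂.factorial : ℝ) * ((n - x₁ - x₂).factorial : ℝ))

noncomputable def mcmD1 (n x₁ x₂ m k : ℕ) (p₁ p₂ : ℝ) : ℝ :=
  -((m:ℝ) * ((x₁:ℝ)/n - p₁)^(m-1) * ((x₂:ℝ)/n - p₂)^k * mcmCo n x₁ x₂ * p₁^x₁ * p₂^x₂ * (1-p₁-p₂)^(n-x₁-x₂))
  + (x₁:ℝ) * (((x₁:ℝ)/n - p₁)^m * ((x₂:ℝ)/n - p₂)^k * mcmCo n x₁ x₂ * p₁^(x₁-1) * p₂^x₂ * (1-p₁-p₂)^(n-x₁-x₂))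
  - ((n-x₁-x₂ : ℕ):ℝ) * (((x₁:ℝ)/n - p₁)^m * ((x₂:ℝ)/n - p₂)^k * mcmCo n x₁ x₂ * p₁^x₁ * p₂^x₂ * (1-p₁-p₂)^((n-x₁-x₂)-1))

noncomputable def mcmD2 (n x₁ x₂ m k : ℕ) (p₁ p₂ : ℝ) : ℝ :=
  -((k:ℝ) * ((x₁:ℝ)/n - p₁)^m * ((x₂:ℝ)/n - p₂)^(k-1) * mcmCo n x₁ x₂ * p₁^x₁ * p₂^x₂ * (1-p₁-p₂)^(n-x₁-x₂))
  + (x₂:ℝ) * (((x₁:ℝ)/n - p₁)^m * ((x₂:ℝ)/n - p₂)^k * mcmCo n x₁ x₂ * p₁^x₁ * p₂^(x₂-1) * (1-p₁-p₂)^(n-x₁-x₂))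
  - ((n-x₁-x₂ : ℕ):ℝ) * (((x₁:ℝ)/n - p₁)^m * ((x₂:ℝ)/n - p₂)^k * mcmCo n x₁ x₂ * p₁^x₁ * p₂^x₂ * (1-p₁-p₂)^((n-x₁-x₂)-1))

lemma hasDerivAt_mcm_left (n m k : ℕ) (p₂ p₁ : ℝ) :
    HasDerivAt (fun q : ℝ => multCentralMoment n m k q p₂)
      (∑ x₁ ∈ Finset.range (n+1), ∑ x₂ ∈ Finset.range (n - x₁ + 1), mcmD1 n x₁ x₂ m k p₁ p₂) p₁ := by
  unfold multCentralMoment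
  refine HasDerivAt.fun_sum fun x₁ _ => HasDerivAt.fun_sum fun x₂ _ => ?_
  have h1 : HasDerivAt (fun q : ℝ => (x₁:ℝ)/(n:ℝ) - q) (-1) p₁ := by
    simpa using (hasDerivAt_id p₁).const_sub ((x₁:ℝ)/(n:ℝ))
  have h2 := h1.pow m
  have h3 := hasDerivAt_pow x₁ p₁
  have h4 : HasDerivAt (fun q : ℝ => 1 - q - p₂) (-1) p₁ := by
    simpa using ((hasDerivAt_id p₁).const_sub 1).sub_const p₂
  have h5 := h4.pow (n - x₁ - x₂)
  have total := ((((h2.mul_const (((x₂:ℝ)/(n:ℝ) - p₂)^k)).mul_const (mcmCo n x₁ x₂)).mul h3).mul_const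
    (p₂^x₂)).mul h5
  convert total using 1
  · rfl
  · rfl
  unfold mcmD1 mcmCo; simp only [Pi.mul_apply, Pi.pow_apply]; ring

lemma hasDerivAt_mcm_right (n m k : ℕ) (p₁ p₂ : ℝ) :
    HasDerivAt (fun q : ℝ => multCentralMoment n m k p₁ q)
      (∑ x₁ ∈ Finset.range (n+1), ∑ x₂ ∈ Finset.range (n - x₁ + 1), mcmD2 n x₁ x₂ m k p₁ p₂) p₂ := by
  unfold multCentralMoment
  refine HasDerivAt.fun_sum fun x₁ _ => HasDerivAt.fun_sum fun x₂ _ => ?_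
  have h1 : HasDerivAt (fun q : ℝ => (x₂:ℝ)/(n:ℝ) - q) (-1) p₂ := by
    simpa using (hasDerivAt_id p₂).const_sub ((x₂:ℝ)/(n:ℝ))
  have h2 := h1.pow k
  have h3 := hasDerivAt_pow x₂ p₂
  have h4 : HasDerivAt (fun q : ℝ => 1 - p₁ - q) (-1) p₂ := by
    simpa using (hasDerivAt_id p₂).const_sub (1 - p₁)
  have h5 := h4.pow (n - x₁ - x₂)
  have total := ((((h2.const_mul (((x₁:ℝ)/(n:ℝ) - p₁)^m)).mul_const (mcmCo n x₁ x₂)).mul_const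
    (p₁^x₁)).mul h3).mul h5
  convert total using 1
  · rfl
  · rfl
  unfold mcmD2 mcmCo; simp only [Pi.mul_apply, Pi.pow_apply]; ring

lemma mcm_key (n m k : ℕ) (hn : 0 < n) (p₁ p₂ : ℝ) :
    (n:ℝ) * multCentralMoment n (m+1) k p₁ p₂
      = p₁ * ((1-p₁) * deriv (fun q : ℝ => multCentralMoment n m k q p₂) p₁
          - p₂ * deriv (fun q : ℝ => multCentralMoment n m k p₁ q) p₂
          + (1-p₁) * (m:ℝ) * multCentralMoment n (m-1) k p₁ p₂
          - p₂ * (k:ℝ) * multCentralMoment n m (k-1) p₁ p₂) := by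
  have hnR : (n:ℝ) ≠ 0 := Nat.cast_ne_zero.mpr hn.ne'
  rw [(hasDerivAt_mcm_left n m k p₂ p₁).deriv, (hasDerivAt_mcm_right n m k p₁ p₂).deriv]
  unfold multCentralMoment mcmD1 mcmD2 mcmCo
  simp only [Finset.mul_sum, ← Finset.sum_sub_distrib, ← Finset.sum_add_distrib]
  refine Finset.sum_congr rfl fun x₁ hx₁ => Finset.sum_congr rfl fun x₂ hx₂ => ?_
  have h1 : x₁ ≤ n := by simpa [Nat.lt_succ_iff] using Finset.mem_range.mp hx₁
  have h2 : x₂ ≤ n - x₁ := by simpa [Nat.lt_succ_iff] using Finset.mem_range.mp hx₂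
  have hA := mcm_aux_pow p₁ x₁
  have hB := mcm_aux_pow p₂ x₂
  have hS := mcm_aux_pow (1 - p₁ - p₂) (n - x₁ - x₂)
  have hR : ((x₂:ℕ):ℝ) + ((n - x₁ - x₂ : ℕ):ℝ) = (n:ℝ) - (x₁:ℝ) := by
    have h3 : (x₂ + (n - x₁ - x₂) : ℕ) = n - x₁ := by omega
    rw [← Nat.cast_add, h3, Nat.cast_sub h1]
  have hU : ((x₁:ℝ)/(n:ℝ) - p₁) * (n:ℝ) = (x₁:ℝ) - (n:ℝ) * p₁ := by
    field_simp
  set U := ((x₁:ℝ)/(n:ℝ) - p₁) with hUdef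
  set V := ((x₂:ℝ)/(n:ℝ) - p₂)^k with hVdef
  set c := (n.factorial : ℝ) / ((x₁.factorial : ℝ) * (x₂.factorial : ℝ) * ((n - x₁ - x₂).factorial : ℝ)) with hcdef
  set A := p₁^x₁ with hAdef
  set B := p₂^x₂ with hBdef
  set S := (1-p₁-p₂)^(n-x₁-x₂) with hSdef
  linear_combination (-(1-p₁) * U^m * V * c * B * S) * hA
    + (p₁ * U^m * V * c * A * S) * hB
    + (p₁ * U^m * V * c * A * B) * hS
    + (p₁ * U^m * V * c * A * B * S) * hR
    + (U^m * V * c * A * B * S) * hU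

end Aux

/-- Recursion for the joint central moments of the normalized multinomial
frequencies. -/
theorem multCentralMoment_recursion (n : ℕ) (hn : 0 < n) (p₁ p₂ : ℝ)
    (hp₁ : 0 < p₁) (hp₂ : 0 < p₂) (hsum : p₁ + p₂ < 1) :
    multCentralMoment n 1 0 p₁ p₂ = 0 ∧
    multCentralMoment n 1 1 p₁ p₂ = -(p₁ * p₂) / (n : ℝ) ∧
    ∀ m k : ℕ, 1 ≤ m →
      multCentralMoment n (m + 1) k p₁ p₂ =
        p₁ / (n : ℝ) *
          ((1 - p₁) * deriv (fun q : ℝ => multCentralMoment n m k q p₂) p₁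
            - p₂ * deriv (fun q : ℝ => multCentralMoment n m k p₁ q) p₂
            + (1 - p₁) * (m : ℝ) * multCentralMoment n (m - 1) k p₁ p₂
            - p₂ * (k : ℝ) * multCentralMoment n m (k - 1) p₁ p₂) := by
  have hnR : (n:ℝ) ≠ 0 := Nat.cast_ne_zero.mpr hn.ne'
  refine ⟨?_, ?_, ?_⟩
  · have h := mcm_key n 0 0 hn p₁ p₂
    have e1 : (fun q : ℝ => multCentralMoment n 0 0 q p₂) = fun _ => 1 :=
      funext fun q => mcm00 n q p₂
    have e2 : (fun q : ℝ => multCentralMoment n 0 0 p₁ q) = fun _ => 1 :=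
      funext fun q => mcm00 n p₁ q
    rw [e1, e2, deriv_const, deriv_const] at h
    simp only [Nat.cast_zero, zero_add] at h
    have : (n:ℝ) * multCentralMoment n 1 0 p₁ p₂ = 0 := by rw [h]; ring
    exact (mul_eq_zero.mp this).resolve_left hnR
  · have h := mcm_key n 0 1 hn p₁ p₂
    have e1 : (fun q : ℝ => multCentralMoment n 0 1 q p₂) = fun _ => 0 :=
      funext fun q => mcm01 n hn q p₂
    have e2 : (fun q : ℝ => multCentralMoment n 0 1 p₁ q) = fun _ => 0 :=
      funext fun q => mcm01 n hn p₁ q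
    rw [e1, e2, deriv_const, deriv_const, mcm00 n p₁ p₂] at h
    simp only [Nat.cast_zero, Nat.cast_one, zero_add] at h
    rw [eq_div_iff hnR]
    linear_combination h
  · intro m k hm
    have h := mcm_key n m k hn p₁ p₂
    rw [div_mul_eq_mul_div, eq_div_iff hnR]
    linear_combination h
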